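/- Let p ∈ (0,1) and let π be a policy on Y = {y₁, y₂} with π(y₁) > 0, π(y₂) > 0, and π(y₁) + π(y₂) = 1. With σ the logistic function, p·(−log σ(log π(y₁) − log π(y₂))) + (1−p)·(−log σ(log π(y₂) − log π(y₁))) = KL_b(p ‖ π(y₁)) + H_b(p), where KL_b(p ‖ q) = p·log(p/q) + (1−p)·log((1−p)/(1−q)) and H_b(p) = −p·log p − (1−p)·log(1−p). In particular, the population DPO loss with λ = 1 and uniform reference policy over two responses equals the reverse KL divergence KL(π* ‖ π) plus a constant independent of π, where π* is the policy with π*(y₁) = p. -/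
import Mathlib


/-- The logistic (sigmoid) function `σ(x) = 1 / (1 + exp (−x))`. -/
noncomputable def logistic (x : ℝ) : ℝ := 1 / (1 + Real.exp (-x))

/-- Binary KL divergence `KL_b(p ‖ q) = p log (p/q) + (1−p) log ((1−p)/(1−q))`. -/
noncomputable def KLb (p q : ℝ) : ℝ :=
  p * Real.log (p / q) + (1 - p) * Real.log ((1 - p) / (1 - q))

/-- Binary entropy `H_b(p) = −p log p − (1−p) log (1−p)`. -/
noncomputable def Hb (p : ℝ) : ℝ :=
  -(p * Real.log p) - (1 - p) * Real.log (1 - p)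

lemma logistic_log_ratio (a b : ℝ) (ha : 0 < a) (hb : 0 < b) :
    logistic (Real.log a - Real.log b) = a / (a + b) := by
  unfold logistic
  rw [neg_sub, ← Real.log_div (ne_of_gt hb) (ne_of_gt ha),
    Real.exp_log (div_pos hb ha)]
  field_simp

/-- For `p ∈ (0,1)` and a full-support policy `π` on `{y₁, y₂}`, the per-pair population
DPO loss with `λ = 1` and uniform reference policy equals `KL_b(p ‖ π y₁) + H_b p`,
i.e. the reverse KL divergence `KL(π* ‖ π)` (with `π* y₁ = p`) plus a constant
independent of `π`. -/
theorem dpo_two_point_loss_eq_reverse_kl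
    (p : ℝ) (hp : p ∈ Set.Ioo (0 : ℝ) 1)
    (π : Fin 2 → ℝ) (hπ0 : 0 < π 0) (hπ1 : 0 < π 1) (hπsum : π 0 + π 1 = 1) :
    p * (-Real.log (logistic (Real.log (π 0) - Real.log (π 1)))) +
      (1 - p) * (-Real.log (logistic (Real.log (π 1) - Real.log (π 0)))) =
    KLb p (π 0) + Hb p ∧
    KLb p (π 0) + Hb p =
      (p * Real.log (p / π 0) + (1 - p) * Real.log ((1 - p) / π 1)) + Hb p := by
  obtain ⟨hp0, hp1⟩ := hp
  have h10 : 1 - π 0 = π 1 := by linarith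
  have h1 : logistic (Real.log (π 0) - Real.log (π 1)) = π 0 := by
    rw [logistic_log_ratio _ _ hπ0 hπ1, hπsum, div_one]
  have h2 : logistic (Real.log (π 1) - Real.log (π 0)) = π 1 := by
    rw [logistic_log_ratio _ _ hπ1 hπ0]
    rw [add_comm] at hπsum
    rw [hπsum, div_one]
  constructor
  · rw [h1, h2]
    unfold KLb Hb
    rw [h10, Real.log_div (ne_of_gt hp0) (ne_of_gt hπ0),
      Real.log_div (by linarith : (1:ℝ) - p ≠ 0) (ne_of_gt hπ1)]
    ring
  · unfold KLb
    rw [h10]
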